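/- MacMahon's box formula for r = 2: the generating function for plane partitions with at most 2 rows, at most s columns, and all parts at most t is ∏_{j=1}^{s} (1-x^{j+t})(1-x^{j+t+1}) / ((1-x^{j})(1-x^{j+1})). -/

import Mathlib

open PowerSeries Finset

noncomputable section

/-- Partition in an `s × t` box, as an antitone function supported on `[0,s)` bounded by `t`. -/
def IsBox (s t : ℕ) (f : ℕ → ℕ) : Prop :=
  (∀ i j, i ≤ j → f j ≤ f i) ∧ (∀ j, f j ≤ t) ∧ (∀ j, s ≤ j → f j = 0)

open Classical in
def boxF (s t : ℕ) : Finset (ℕ → ℕ) :=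
  ((univ : Finset (Fin s → Fin (t+1))).image
    (fun g j => if h : j < s then (g ⟨j, h⟩ : ℕ) else 0)).filter (IsBox s t)

lemma mem_boxF {s t : ℕ} {f : ℕ → ℕ} : f ∈ boxF s t ↔ IsBox s t f := by
  classical
  unfold boxF
  rw [Finset.mem_filter]
  constructor
  · exact fun h => h.2
  · intro h
    refine ⟨Finset.mem_image.mpr ⟨fun i => ⟨f i, Nat.lt_succ_of_le (h.2.1 i)⟩,
      Finset.mem_univ _, ?_⟩, h⟩
    funext j
    by_cases hj : j < s
    · simp [hj]
    · simp [hj, h.2.2 j (le_of_not_gt hj)]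

lemma sum_range_of_support {f : ℕ → ℕ} {s n : ℕ} (hs : ∀ j, s ≤ j → f j = 0) (h : s ≤ n) :
    ∑ j ∈ range n, f j = ∑ j ∈ range s, f j := by
  refine (Finset.sum_subset (Finset.range_subset_range.mpr h) ?_).symm
  intro x _ hx
  exact hs x (by simpa using hx)

def Bser (s t : ℕ) : ℚ⟦X⟧ := ∑ f ∈ boxF s t, X ^ (∑ j ∈ range s, f j)

lemma boxF_zero_fun_mem (s t : ℕ) : (fun _ => 0) ∈ boxF s t := by
  rw [mem_boxF]; exact ⟨fun _ _ _ => le_rfl, fun _ => Nat.zero_le _, fun _ _ => rfl⟩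

lemma boxF_zero_left (t : ℕ) : boxF 0 t = {fun _ => 0} := by
  ext f
  rw [mem_boxF]
  constructor
  · intro h
    rw [Finset.mem_singleton]
    funext j; exact h.2.2 j (Nat.zero_le _)
  · intro h
    rw [Finset.mem_singleton] at h
    subst h
    exact ⟨fun _ _ _ => le_rfl, fun _ => Nat.zero_le _, fun _ _ => rfl⟩

lemma boxF_zero_right (s : ℕ) : boxF s 0 = {fun _ => 0} := by
  ext f
  rw [mem_boxF]
  constructor
  · intro h
    rw [Finset.mem_singleton]
    funext j; exact Nat.le_zero.mp (h.2.1 j)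
  · intro h
    rw [Finset.mem_singleton] at h
    subst h
    exact ⟨fun _ _ _ => le_rfl, fun _ => Nat.zero_le _, fun _ _ => rfl⟩

lemma Bser_zero_left (t : ℕ) : Bser 0 t = 1 := by
  simp [Bser, boxF_zero_left]

lemma Bser_zero_right (s : ℕ) : Bser s 0 = 1 := by
  simp [Bser, boxF_zero_right]


lemma Bser_pascal (s t : ℕ) :
    Bser (s+1) (t+1) = Bser s (t+1) + X ^ (s+1) * Bser (s+1) t := by
  classical
  have hsplit := Finset.sum_filter_add_sum_filter_not (boxF (s+1) (t+1))
    (fun f => f s = 0) (fun f => (X : ℚ⟦X⟧) ^ (∑ j ∈ range (s+1), f j))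
  have h1 : ∑ f ∈ (boxF (s+1) (t+1)).filter (fun f => f s = 0),
      (X : ℚ⟦X⟧) ^ (∑ j ∈ range (s+1), f j) = Bser s (t+1) := by
    have hset : (boxF (s+1) (t+1)).filter (fun f => f s = 0) = boxF s (t+1) := by
      ext f
      rw [Finset.mem_filter, mem_boxF, mem_boxF]
      constructor
      · rintro ⟨⟨ha, hb, hc⟩, h0⟩
        exact ⟨ha, hb, fun j hj => Nat.le_zero.mp (h0 ▸ ha s j hj)⟩
      · rintro ⟨ha, hb, hc⟩
        exact ⟨⟨ha, hb, fun j hj => hc j (le_trans (Nat.le_succ s) hj)⟩, hc s le_rfl⟩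
    rw [hset, Bser]
    refine Finset.sum_congr rfl fun f hf => ?_
    rw [sum_range_of_support (mem_boxF.mp hf).2.2 (Nat.le_succ s)]
  have h2 : ∑ f ∈ (boxF (s+1) (t+1)).filter (fun f => ¬ f s = 0),
      (X : ℚ⟦X⟧) ^ (∑ j ∈ range (s+1), f j) = X ^ (s+1) * Bser (s+1) t := by
    rw [Bser, Finset.mul_sum]
    refine Finset.sum_nbij' (fun f j => f j - 1)
      (fun g j => if j ≤ s then g j + 1 else 0) ?_ ?_ ?_ ?_ ?_
    · intro f hf
      rw [Finset.mem_filter, mem_boxF] at hf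
      obtain ⟨⟨ha, hb, hc⟩, h0⟩ := hf
      rw [mem_boxF]
      refine ⟨fun i j hij => Nat.sub_le_sub_right (ha i j hij) 1,
        fun j => ?_, fun j hj => ?_⟩
      · show f j - 1 ≤ t
        have := hb j; omega
      · show f j - 1 = 0
        rw [hc j hj]
    · intro g hg
      rw [mem_boxF] at hg
      obtain ⟨ha, hb, hc⟩ := hg
      rw [Finset.mem_filter, mem_boxF]
      refine ⟨⟨fun i j hij => ?_, fun j => ?_, fun j hj => ?_⟩, by simp⟩
      · by_cases hj : j ≤ s
        · simp [hj, le_trans hij hj, Nat.add_le_add_right (ha i j hij) 1]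
        · simp [hj]
      · by_cases hj : j ≤ s
        · simp [hj]; have := hb j; omega
        · simp [hj]
      · have : ¬ j ≤ s := by omega
        simp [this]
    · intro f hf
      rw [Finset.mem_filter, mem_boxF] at hf
      obtain ⟨⟨ha, hb, hc⟩, h0⟩ := hf
      funext j
      by_cases hj : j ≤ s
      · have : 1 ≤ f j := by have := ha j s hj; omega
        simp [hj]; omega
      · simp [hj, hc j (by omega)]
    · intro g hg
      rw [mem_boxF] at hg
      obtain ⟨ha, hb, hc⟩ := hg
      funext j
      by_cases hj : j ≤ s
      · simp [hj]
      · simp [hj, hc j (by omega)]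
    · intro f hf
      rw [Finset.mem_filter, mem_boxF] at hf
      obtain ⟨⟨ha, hb, hc⟩, h0⟩ := hf
      rw [← pow_add]
      congr 1
      have hge : ∀ j ∈ range (s+1), f j = (f j - 1) + 1 := by
        intro j hj
        simp only [Finset.mem_range] at hj
        have := ha j s (by omega)
        omega
      rw [Finset.sum_congr rfl hge, Finset.sum_add_distrib]
      simp [add_comm]
  rw [Bser, ← hsplit, h1, h2]


lemma prod_shift (s : ℕ) (g : ℕ → ℚ⟦X⟧) :
    ∏ j ∈ Icc 1 (s+1), g j = g 1 * ∏ j ∈ Icc 1 s, g (j+1) := by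
  have h1 : Icc 1 (s+1) = insert 1 (Ioc 1 (s+1)) :=
    (Finset.Ioc_insert_left (by omega)).symm
  have h2 : (Ioc 1 (s+1) : Finset ℕ) = (Icc 1 s).map (addRightEmbedding 1) := by
    rw [Finset.map_add_right_Icc]
    rw [Finset.Icc_add_one_left_eq_Ioc]
  rw [h1, Finset.prod_insert (by simp), h2, Finset.prod_map]
  rfl

lemma prod_top (s : ℕ) (g : ℕ → ℚ⟦X⟧) :
    ∏ j ∈ Icc 1 (s+1), g j = (∏ j ∈ Icc 1 s, g j) * g (s+1) := by
  rw [← Finset.prod_Icc_succ_top (by omega : 1 ≤ s + 1)]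

lemma Bprod (s : ℕ) : ∀ t, Bser s t * ∏ j ∈ Icc 1 s, (1 - X ^ j : ℚ⟦X⟧)
    = ∏ j ∈ Icc 1 s, (1 - X ^ (t + j)) := by
  induction s with
  | zero => intro t; simp [Bser_zero_left]
  | succ s ihs =>
    intro t
    induction t with
    | zero => simp [Bser_zero_right]
    | succ t iht =>
      rw [Bser_pascal, add_mul, mul_assoc, iht]
      have h1 : Bser s (t+1) * ∏ j ∈ Icc 1 (s+1), (1 - X ^ j : ℚ⟦X⟧)
          = (∏ j ∈ Icc 1 s, (1 - X ^ (t + 1 + j))) * (1 - X ^ (s+1)) := by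
        rw [prod_top s (fun j => 1 - X ^ j), ← mul_assoc, ihs (t+1)]
      rw [h1]
      have h2 : ∏ j ∈ Icc 1 (s+1), (1 - X ^ (t + j) : ℚ⟦X⟧)
          = (1 - X ^ (t+1)) * ∏ j ∈ Icc 1 s, (1 - X ^ (t + 1 + j)) := by
        rw [prod_shift s (fun j => 1 - X ^ (t + j))]
        congr 1
        refine Finset.prod_congr rfl fun j _ => ?_
        rw [show t + (j + 1) = t + 1 + j by omega]
      rw [h2]
      have h3 : ∏ j ∈ Icc 1 (s+1), (1 - X ^ (t + 1 + j) : ℚ⟦X⟧)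
          = (∏ j ∈ Icc 1 s, (1 - X ^ (t + 1 + j))) * (1 - X ^ (t + 1 + (s + 1))) := by
        rw [prod_top s (fun j => 1 - X ^ (t + 1 + j))]
      rw [h3]
      ring

open Classical in
def ppF (s t : ℕ) : Finset ((ℕ → ℕ) × (ℕ → ℕ)) :=
  (boxF s t ×ˢ boxF s t).filter (fun p => ∀ j, p.2 j ≤ p.1 j)

def PPser (s t : ℕ) : ℚ⟦X⟧ :=
  ∑ p ∈ ppF s t, X ^ (∑ j ∈ range s, p.1 j + ∑ j ∈ range s, p.2 j)

def fwdPair (p : (ℕ → ℕ) × (ℕ → ℕ)) : (ℕ → ℕ) × (ℕ → ℕ) :=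
  (fun i => if i ≤ sInf {i | p.1 i < p.2 i} then p.2 i - 1 else p.1 (i-1),
   fun i => if i < sInf {i | p.1 i < p.2 i} then p.1 i + 1 else p.2 (i+1))

def bwdPair (q : (ℕ → ℕ) × (ℕ → ℕ)) : (ℕ → ℕ) × (ℕ → ℕ) :=
  (fun i => if i < sInf {i | q.2 i ≤ q.1 i + 1} then q.2 i - 1 else q.1 (i+1),
   fun i => if i ≤ sInf {i | q.2 i ≤ q.1 i + 1} then q.1 i + 1 else q.2 (i-1))

lemma key_reflection (s t : ℕ) :
    Bser (s+1) (t+1) * Bser (s+1) (t+1)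
      = PPser (s+1) (t+1) + X * (Bser (s+2) t * Bser s (t+2)) := by
  classical
  have expand : Bser (s+1) (t+1) * Bser (s+1) (t+1)
      = ∑ p ∈ boxF (s+1) (t+1) ×ˢ boxF (s+1) (t+1),
          (X : ℚ⟦X⟧) ^ (∑ j ∈ range (s+1), p.1 j + ∑ j ∈ range (s+1), p.2 j) := by
    rw [Bser, Finset.sum_mul_sum, Finset.sum_product]
    exact Finset.sum_congr rfl fun f _ => Finset.sum_congr rfl fun g _ => (pow_add _ _ _).symm
  rw [expand, ← Finset.sum_filter_add_sum_filter_not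
    (boxF (s+1) (t+1) ×ˢ boxF (s+1) (t+1)) (fun p => ∀ j, p.2 j ≤ p.1 j)]
  congr 1
  have expand2 : X * (Bser (s+2) t * Bser s (t+2))
      = ∑ q ∈ boxF (s+2) t ×ˢ boxF s (t+2),
          (X : ℚ⟦X⟧) ^ (1 + (∑ j ∈ range (s+2), q.1 j + ∑ j ∈ range s, q.2 j)) := by
    rw [Bser, Bser, Finset.sum_mul_sum, Finset.mul_sum, Finset.sum_product]
    refine Finset.sum_congr rfl fun f _ => ?_
    rw [Finset.mul_sum]
    refine Finset.sum_congr rfl fun g _ => ?_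
    rw [← pow_add, ← pow_succ']
    congr 1
    dsimp only
    omega
  rw [expand2]
  refine Finset.sum_nbij' fwdPair bwdPair ?_ ?_ ?_ ?_ ?_
  · -- fwdPair maps into target
    rintro ⟨lam, mu⟩ hp
    rw [Finset.mem_filter, Finset.mem_product, mem_boxF, mem_boxF] at hp
    have hL : IsBox (s+1) (t+1) lam := hp.1.1
    have hM : IsBox (s+1) (t+1) mu := hp.1.2
    have hv : ∃ j, lam j < mu j := by
      have := hp.2; push_neg at this; exact this
    obtain ⟨jv, hjv⟩ := hv
    have hVne : {i | lam i < mu i}.Nonempty := ⟨jv, hjv⟩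
    set j0 := sInf {i | lam i < mu i} with hj0def
    have hj0 : lam j0 < mu j0 := Nat.sInf_mem hVne
    have hmin : ∀ i, i < j0 → mu i ≤ lam i := by
      intro i hi
      have h' : i ∉ {i | lam i < mu i} := Nat.notMem_of_lt_sInf hi
      simp only [Set.mem_setOf_eq] at h'
      omega
    have hj0s : j0 ≤ s := by
      by_contra h
      have := hM.2.2 j0 (by omega)
      omega
    rw [Finset.mem_product, mem_boxF, mem_boxF]
    constructor
    · refine ⟨?_, ?_, ?_⟩
      · intro i j hij
        show (if j ≤ j0 then mu j - 1 else lam (j-1)) ≤ (if i ≤ j0 then mu i - 1 else lam (i-1))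
        by_cases hj : j ≤ j0
        · rw [if_pos hj, if_pos (le_trans hij hj)]
          exact Nat.sub_le_sub_right (hM.1 i j hij) 1
        · rw [if_neg hj]
          by_cases hi : i ≤ j0
          · rw [if_pos hi]
            have h1 : lam (j-1) ≤ lam j0 := hL.1 j0 (j-1) (by omega)
            have h2 : mu j0 ≤ mu i := hM.1 i j0 hi
            omega
          · rw [if_neg hi]
            exact hL.1 (i-1) (j-1) (by omega)
      · intro j
        show (if j ≤ j0 then mu j - 1 else lam (j-1)) ≤ t
        by_cases hj : j ≤ j0
        · rw [if_pos hj]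
          have := hM.2.1 j; omega
        · rw [if_neg hj]
          have h1 : lam (j-1) ≤ lam j0 := hL.1 j0 (j-1) (by omega)
          have h2 := hM.2.1 j0
          omega
      · intro j hj
        show (if j ≤ j0 then mu j - 1 else lam (j-1)) = 0
        rw [if_neg (by omega : ¬ j ≤ j0)]
        exact hL.2.2 (j-1) (by omega)
    · refine ⟨?_, ?_, ?_⟩
      · intro i j hij
        show (if j < j0 then lam j + 1 else mu (j+1)) ≤ (if i < j0 then lam i + 1 else mu (i+1))
        by_cases hj : j < j0
        · rw [if_pos hj, if_pos (lt_of_le_of_lt hij hj)]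
          have := hL.1 i j hij; omega
        · rw [if_neg hj]
          by_cases hi : i < j0
          · rw [if_pos hi]
            have h1 : mu (j+1) ≤ mu i := hM.1 i (j+1) (by omega)
            have h2 : mu i ≤ lam i := hmin i hi
            omega
          · rw [if_neg hi]
            exact hM.1 (i+1) (j+1) (by omega)
      · intro j
        show (if j < j0 then lam j + 1 else mu (j+1)) ≤ t + 2
        by_cases hj : j < j0
        · rw [if_pos hj]
          have := hL.2.1 j; omega
        · rw [if_neg hj]
          have := hM.2.1 (j+1); omega
      · intro j hj
        show (if j < j0 then lam j + 1 else mu (j+1)) = 0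
        rw [if_neg (by omega : ¬ j < j0)]
        exact hM.2.2 (j+1) (by omega)
  · -- bwdPair maps into source
    rintro ⟨al, be⟩ hq
    rw [Finset.mem_product, mem_boxF, mem_boxF] at hq
    have hA : IsBox (s+2) t al := hq.1
    have hB : IsBox s (t+2) be := hq.2
    have hsmem : s ∈ {i | be i ≤ al i + 1} := by
      show be s ≤ al s + 1
      rw [hB.2.2 s le_rfl]; omega
    have hne : {i | be i ≤ al i + 1}.Nonempty := ⟨s, hsmem⟩
    set j1 := sInf {i | be i ≤ al i + 1} with hj1def
    have hj1s : j1 ≤ s := Nat.sInf_le hsmem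
    have hcrit : be j1 ≤ al j1 + 1 := Nat.sInf_mem hne
    have hbmin : ∀ i, i < j1 → al i + 2 ≤ be i := by
      intro i hi
      have h' : i ∉ {i | be i ≤ al i + 1} := Nat.notMem_of_lt_sInf hi
      simp only [Set.mem_setOf_eq] at h'
      omega
    rw [Finset.mem_filter, Finset.mem_product, mem_boxF, mem_boxF]
    refine ⟨⟨?_, ?_⟩, ?_⟩
    · refine ⟨?_, ?_, ?_⟩
      · intro i j hij
        show (if j < j1 then be j - 1 else al (j+1)) ≤ (if i < j1 then be i - 1 else al (i+1))
        by_cases hj : j < j1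
        · rw [if_pos hj, if_pos (lt_of_le_of_lt hij hj)]
          have := hB.1 i j hij; omega
        · rw [if_neg hj]
          by_cases hi : i < j1
          · rw [if_pos hi]
            have h1 : al (j+1) ≤ al i := hA.1 i (j+1) (by omega)
            have h2 := hbmin i hi
            omega
          · rw [if_neg hi]
            exact hA.1 (i+1) (j+1) (by omega)
      · intro j
        show (if j < j1 then be j - 1 else al (j+1)) ≤ t + 1
        by_cases hj : j < j1
        · rw [if_pos hj]
          have := hB.2.1 j; omega
        · rw [if_neg hj]
          have := hA.2.1 (j+1); omega
      · intro j hj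
        show (if j < j1 then be j - 1 else al (j+1)) = 0
        rw [if_neg (by omega : ¬ j < j1)]
        exact hA.2.2 (j+1) (by omega)
    · refine ⟨?_, ?_, ?_⟩
      · intro i j hij
        show (if j ≤ j1 then al j + 1 else be (j-1)) ≤ (if i ≤ j1 then al i + 1 else be (i-1))
        by_cases hj : j ≤ j1
        · rw [if_pos hj, if_pos (le_trans hij hj)]
          have := hA.1 i j hij; omega
        · rw [if_neg hj]
          by_cases hi : i ≤ j1
          · rw [if_pos hi]
            have h1 : be (j-1) ≤ be j1 := hB.1 j1 (j-1) (by omega)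
            have h2 : al j1 ≤ al i := hA.1 i j1 hi
            omega
          · rw [if_neg hi]
            exact hB.1 (i-1) (j-1) (by omega)
      · intro j
        show (if j ≤ j1 then al j + 1 else be (j-1)) ≤ t + 1
        by_cases hj : j ≤ j1
        · rw [if_pos hj]
          have := hA.2.1 j; omega
        · rw [if_neg hj]
          have h1 : be (j-1) ≤ be j1 := hB.1 j1 (j-1) (by omega)
          have h2 := hA.2.1 j1
          omega
      · intro j hj
        show (if j ≤ j1 then al j + 1 else be (j-1)) = 0
        rw [if_neg (by omega : ¬ j ≤ j1)]
        exact hB.2.2 (j-1) (by omega)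
    · show ¬ ∀ j, (if j ≤ j1 then al j + 1 else be (j-1)) ≤ (if j < j1 then be j - 1 else al (j+1))
      push_neg
      refine ⟨j1, ?_⟩
      rw [if_pos le_rfl, if_neg (lt_irrefl j1)]
      have : al (j1+1) ≤ al j1 := hA.1 j1 (j1+1) (by omega)
      omega
  · -- left inverse
    rintro ⟨lam, mu⟩ hp
    rw [Finset.mem_filter, Finset.mem_product, mem_boxF, mem_boxF] at hp
    have hL : IsBox (s+1) (t+1) lam := hp.1.1
    have hM : IsBox (s+1) (t+1) mu := hp.1.2
    have hv : ∃ j, lam j < mu j := by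
      have := hp.2; push_neg at this; exact this
    obtain ⟨jv, hjv⟩ := hv
    have hVne : {i | lam i < mu i}.Nonempty := ⟨jv, hjv⟩
    set j0 := sInf {i | lam i < mu i} with hj0def
    have hj0 : lam j0 < mu j0 := Nat.sInf_mem hVne
    have hmin : ∀ i, i < j0 → mu i ≤ lam i := by
      intro i hi
      have h' : i ∉ {i | lam i < mu i} := Nat.notMem_of_lt_sInf hi
      simp only [Set.mem_setOf_eq] at h'
      omega
    have hmupos : ∀ i, i ≤ j0 → 1 ≤ mu i := fun i hi =>
      le_trans (by omega) (hM.1 i j0 hi)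
    have hj0mem : j0 ∈ {i | (fwdPair (lam, mu)).2 i ≤ (fwdPair (lam, mu)).1 i + 1} := by
      show (if j0 < j0 then lam j0 + 1 else mu (j0+1))
          ≤ (if j0 ≤ j0 then mu j0 - 1 else lam (j0-1)) + 1
      rw [if_neg (lt_irrefl j0), if_pos le_rfl]
      have h1 : mu (j0+1) ≤ mu j0 := hM.1 j0 (j0+1) (by omega)
      omega
    have hback : sInf {i | (fwdPair (lam, mu)).2 i ≤ (fwdPair (lam, mu)).1 i + 1} = j0 := by
      apply le_antisymm (Nat.sInf_le hj0mem)
      by_contra h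
      push_neg at h
      have hne2 : {i | (fwdPair (lam, mu)).2 i ≤ (fwdPair (lam, mu)).1 i + 1}.Nonempty :=
        ⟨j0, hj0mem⟩
      have hmem2 := Nat.sInf_mem hne2
      set j2 := sInf {i | (fwdPair (lam, mu)).2 i ≤ (fwdPair (lam, mu)).1 i + 1} with hj2
      have hmem2' : (if j2 < j0 then lam j2 + 1 else mu (j2+1))
          ≤ (if j2 ≤ j0 then mu j2 - 1 else lam (j2-1)) + 1 := hmem2
      rw [if_pos (by omega : j2 < j0), if_pos (by omega : j2 ≤ j0)] at hmem2'
      have h1 := hmupos j2 (by omega)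
      have h2 := hmin j2 (by omega)
      omega
    have heq : bwdPair (fwdPair (lam, mu)) =
        (fun i => if i < j0 then (fwdPair (lam, mu)).2 i - 1 else (fwdPair (lam, mu)).1 (i+1),
         fun i => if i ≤ j0 then (fwdPair (lam, mu)).1 i + 1 else (fwdPair (lam, mu)).2 (i-1)) := by
      rw [bwdPair, hback]
    rw [heq]
    refine Prod.ext ?_ ?_
    · show (fun i => if i < j0 then (if i < j0 then lam i + 1 else mu (i+1)) - 1
        else (if i + 1 ≤ j0 then mu (i+1) - 1 else lam (i+1-1))) = lam
      funext i
      by_cases hi : i < j0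
      · rw [if_pos hi, if_pos hi]; omega
      · rw [if_neg hi, if_neg (by omega : ¬ i + 1 ≤ j0)]
        congr 1
    · show (fun i => if i ≤ j0 then (if i ≤ j0 then mu i - 1 else lam (i-1)) + 1
        else (if i - 1 < j0 then lam (i-1) + 1 else mu (i-1+1))) = mu
      funext i
      by_cases hi : i ≤ j0
      · rw [if_pos hi, if_pos hi]
        have := hmupos i hi
        omega
      · rw [if_neg hi, if_neg (by omega : ¬ i - 1 < j0)]
        congr 1
        omega
  · -- right inverse
    rintro ⟨al, be⟩ hq
    rw [Finset.mem_product, mem_boxF, mem_boxF] at hq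
    have hA : IsBox (s+2) t al := hq.1
    have hB : IsBox s (t+2) be := hq.2
    have hsmem : s ∈ {i | be i ≤ al i + 1} := by
      show be s ≤ al s + 1
      rw [hB.2.2 s le_rfl]; omega
    have hne : {i | be i ≤ al i + 1}.Nonempty := ⟨s, hsmem⟩
    set j1 := sInf {i | be i ≤ al i + 1} with hj1def
    have hcrit : be j1 ≤ al j1 + 1 := Nat.sInf_mem hne
    have hbmin : ∀ i, i < j1 → al i + 2 ≤ be i := by
      intro i hi
      have h' : i ∉ {i | be i ≤ al i + 1} := Nat.notMem_of_lt_sInf hi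
      simp only [Set.mem_setOf_eq] at h'
      omega
    have hj1mem : j1 ∈ {i | (bwdPair (al, be)).1 i < (bwdPair (al, be)).2 i} := by
      show (if j1 < j1 then be j1 - 1 else al (j1+1)) < (if j1 ≤ j1 then al j1 + 1 else be (j1-1))
      rw [if_neg (lt_irrefl j1), if_pos le_rfl]
      have : al (j1+1) ≤ al j1 := hA.1 j1 (j1+1) (by omega)
      omega
    have hfwd : sInf {i | (bwdPair (al, be)).1 i < (bwdPair (al, be)).2 i} = j1 := by
      apply le_antisymm (Nat.sInf_le hj1mem)
      by_contra h
      push_neg at h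
      have hne2 : {i | (bwdPair (al, be)).1 i < (bwdPair (al, be)).2 i}.Nonempty := ⟨j1, hj1mem⟩
      have hmem2 := Nat.sInf_mem hne2
      set j2 := sInf {i | (bwdPair (al, be)).1 i < (bwdPair (al, be)).2 i} with hj2
      have hmem2' : (if j2 < j1 then be j2 - 1 else al (j2+1))
          < (if j2 ≤ j1 then al j2 + 1 else be (j2-1)) := hmem2
      rw [if_pos (by omega : j2 < j1), if_pos (by omega : j2 ≤ j1)] at hmem2'
      have h2 := hbmin j2 (by omega)
      omega
    have heq : fwdPair (bwdPair (al, be)) =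
        (fun i => if i ≤ j1 then (bwdPair (al, be)).2 i - 1 else (bwdPair (al, be)).1 (i-1),
         fun i => if i < j1 then (bwdPair (al, be)).1 i + 1 else (bwdPair (al, be)).2 (i+1)) := by
      rw [fwdPair, hfwd]
    rw [heq]
    refine Prod.ext ?_ ?_
    · show (fun i => if i ≤ j1 then (if i ≤ j1 then al i + 1 else be (i-1)) - 1
        else (if i - 1 < j1 then be (i-1) - 1 else al (i-1+1))) = al
      funext i
      by_cases hi : i ≤ j1
      · rw [if_pos hi, if_pos hi]; omega
      · rw [if_neg hi, if_neg (by omega : ¬ i - 1 < j1)]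
        congr 1
        omega
    · show (fun i => if i < j1 then (if i < j1 then be i - 1 else al (i+1)) + 1
        else (if i + 1 ≤ j1 then al (i+1) + 1 else be (i+1-1))) = be
      funext i
      by_cases hi : i < j1
      · rw [if_pos hi, if_pos hi]
        have := hbmin i hi
        omega
      · rw [if_neg hi, if_neg (by omega : ¬ i + 1 ≤ j1)]
        congr 1
  · -- weights
    rintro ⟨lam, mu⟩ hp
    rw [Finset.mem_filter, Finset.mem_product, mem_boxF, mem_boxF] at hp
    have hL : IsBox (s+1) (t+1) lam := hp.1.1
    have hM : IsBox (s+1) (t+1) mu := hp.1.2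
    have hv : ∃ j, lam j < mu j := by
      have := hp.2; push_neg at this; exact this
    obtain ⟨jv, hjv⟩ := hv
    have hVne : {i | lam i < mu i}.Nonempty := ⟨jv, hjv⟩
    set j0 := sInf {i | lam i < mu i} with hj0def
    have hj0 : lam j0 < mu j0 := Nat.sInf_mem hVne
    have hmupos : ∀ i, i ≤ j0 → 1 ≤ mu i := fun i hi =>
      le_trans (by omega) (hM.1 i j0 hi)
    have hj0s : j0 ≤ s := by
      by_contra h
      have := hM.2.2 j0 (by omega)
      omega
    show (X : ℚ⟦X⟧) ^ (∑ j ∈ range (s+1), lam j + ∑ j ∈ range (s+1), mu j)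
      = X ^ (1 + (∑ j ∈ range (s+2), (if j ≤ j0 then mu j - 1 else lam (j-1))
          + ∑ j ∈ range s, (if j < j0 then lam j + 1 else mu (j+1))))
    congr 1
    have eA : ∑ i ∈ range (s+2), (if i ≤ j0 then mu i - 1 else lam (i-1))
        = ∑ i ∈ range (j0+1), (mu i - 1) + ∑ i ∈ Ico j0 (s+1), lam i := by
      simp only [Finset.range_eq_Ico]
      rw [← Finset.sum_Ico_consecutive (fun i => if i ≤ j0 then mu i - 1 else lam (i-1))
        (by omega : 0 ≤ j0+1) (by omega : j0+1 ≤ s+2)]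
      congr 1
      · refine Finset.sum_congr rfl fun i hi => ?_
        rw [Finset.mem_Ico] at hi
        rw [if_pos (by omega)]
      · rw [Finset.sum_Ico_eq_sum_range, Finset.sum_Ico_eq_sum_range]
        refine Finset.sum_congr (by rw [show s+2-(j0+1) = s+1-j0 by omega]) fun i _ => ?_
        rw [if_neg (by omega)]
        congr 1
        omega
    have eB : ∑ i ∈ range s, (if i < j0 then lam i + 1 else mu (i+1))
        = (∑ i ∈ range j0, lam i + j0) + ∑ i ∈ Ico (j0+1) (s+1), mu i := by
      simp only [Finset.range_eq_Ico]
      rw [← Finset.sum_Ico_consecutive (fun i => if i < j0 then lam i + 1 else mu (i+1))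
        (by omega : 0 ≤ j0) (by omega : j0 ≤ s)]
      congr 1
      · have h1 : ∑ i ∈ Ico 0 j0, (if i < j0 then lam i + 1 else mu (i+1))
            = ∑ i ∈ Ico 0 j0, (lam i + 1) := by
          refine Finset.sum_congr rfl fun i hi => ?_
          rw [Finset.mem_Ico] at hi
          rw [if_pos (by omega)]
        rw [h1, Finset.sum_add_distrib]
        simp
      · rw [Finset.sum_Ico_eq_sum_range, Finset.sum_Ico_eq_sum_range]
        refine Finset.sum_congr (by rw [show s-j0 = s+1-(j0+1) by omega]) fun i _ => ?_
        rw [if_neg (by omega)]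
        congr 1
        omega
    have emu1 : ∑ i ∈ range (j0+1), mu i = ∑ i ∈ range (j0+1), (mu i - 1) + (j0+1) := by
      have h1 : ∑ i ∈ range (j0+1), mu i = ∑ i ∈ range (j0+1), ((mu i - 1) + 1) := by
        refine Finset.sum_congr rfl fun i hi => ?_
        rw [Finset.mem_range] at hi
        have := hmupos i (by omega)
        omega
      rw [h1, Finset.sum_add_distrib]
      simp
    have elam : ∑ i ∈ range (s+1), lam i
        = ∑ i ∈ range j0, lam i + ∑ i ∈ Ico j0 (s+1), lam i := by
      simp only [Finset.range_eq_Ico]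
      rw [← Finset.sum_Ico_consecutive lam (by omega : 0 ≤ j0) (by omega : j0 ≤ s+1)]
    have emu : ∑ i ∈ range (s+1), mu i
        = ∑ i ∈ range (j0+1), mu i + ∑ i ∈ Ico (j0+1) (s+1), mu i := by
      simp only [Finset.range_eq_Ico]
      rw [← Finset.sum_Ico_consecutive mu (by omega : 0 ≤ j0+1) (by omega : j0+1 ≤ s+1)]
    omega

lemma sum_ext_eq (s : ℕ) (g : Fin s → ℕ) :
    ∑ j ∈ range s, (if h : j < s then g ⟨j, h⟩ else 0) = ∑ j : Fin s, g j := by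
  rw [Finset.sum_range fun j => if h : j < s then g ⟨j, h⟩ else 0]
  refine Finset.sum_congr rfl fun i _ => ?_
  rw [dif_pos i.isLt]

/-- Number of plane partitions of `k` fitting in the box `B(2,s,t)`:
`2 × s` arrays of nonnegative integers `≤ t`, weakly decreasing along rows
and columns, with total sum `k`. -/
noncomputable def boxedPlanePartitionCount (s t k : ℕ) : ℕ :=
  Nat.card {f : Fin 2 → Fin s → ℕ //
    (∀ i : Fin 2, ∀ j j' : Fin s, j ≤ j' → f i j' ≤ f i j) ∧
    (∀ j : Fin s, f 1 j ≤ f 0 j) ∧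
    (∀ i j, f i j ≤ t) ∧
    ∑ i, ∑ j, f i j = k}

lemma count_eq (s t k : ℕ) :
    boxedPlanePartitionCount s t k
      = ((ppF s t).filter
          (fun p => ∑ j ∈ range s, p.1 j + ∑ j ∈ range s, p.2 j = k)).card := by
  classical
  rw [← Nat.card_eq_finsetCard]
  unfold boxedPlanePartitionCount
  refine Nat.card_congr ⟨fun f => ⟨((fun j => if h : j < s then f.1 0 ⟨j, h⟩ else 0),
      (fun j => if h : j < s then f.1 1 ⟨j, h⟩ else 0)), ?_⟩,
    fun p => ⟨![fun j => p.1.1 (j : ℕ), fun j => p.1.2 (j : ℕ)], ?_⟩, ?_, ?_⟩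
  · -- forward membership
    obtain ⟨f, hmono, hdom, hbd, hsum⟩ := f
    have hrow : ∀ i : Fin 2, IsBox s t (fun j => if h : j < s then f i ⟨j, h⟩ else 0) := by
      intro i
      refine ⟨?_, ?_, ?_⟩
      · intro a b hab
        show (if h : b < s then f i ⟨b, h⟩ else 0) ≤ (if h : a < s then f i ⟨a, h⟩ else 0)
        by_cases hb : b < s
        · have ha : a < s := lt_of_le_of_lt hab hb
          rw [dif_pos hb, dif_pos ha]
          exact hmono i ⟨a, ha⟩ ⟨b, hb⟩ hab
        · rw [dif_neg hb]
          exact Nat.zero_le _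
      · intro j
        show (if h : j < s then f i ⟨j, h⟩ else 0) ≤ t
        by_cases hj : j < s
        · rw [dif_pos hj]; exact hbd i ⟨j, hj⟩
        · rw [dif_neg hj]; exact Nat.zero_le _
      · intro j hj
        show (if h : j < s then f i ⟨j, h⟩ else 0) = 0
        rw [dif_neg (by omega)]
    rw [Finset.mem_filter, ppF, Finset.mem_filter, Finset.mem_product, mem_boxF, mem_boxF]
    refine ⟨⟨⟨hrow 0, hrow 1⟩, ?_⟩, ?_⟩
    · intro j
      show (if h : j < s then f 1 ⟨j, h⟩ else 0) ≤ (if h : j < s then f 0 ⟨j, h⟩ else 0)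
      by_cases hj : j < s
      · rw [dif_pos hj, dif_pos hj]
        exact hdom ⟨j, hj⟩
      · rw [dif_neg hj, dif_neg hj]
    · show (∑ j ∈ range s, (if h : j < s then f 0 ⟨j, h⟩ else 0))
          + (∑ j ∈ range s, (if h : j < s then f 1 ⟨j, h⟩ else 0)) = k
      rw [sum_ext_eq, sum_ext_eq]
      rw [Fin.sum_univ_two] at hsum
      exact hsum
  · -- backward membership
    obtain ⟨⟨p1, p2⟩, hp⟩ := p
    rw [Finset.mem_filter, ppF, Finset.mem_filter, Finset.mem_product,
      mem_boxF, mem_boxF] at hp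
    have h1' : IsBox s t p1 := hp.1.1.1
    have h2' : IsBox s t p2 := hp.1.1.2
    have hdom' : ∀ j, p2 j ≤ p1 j := hp.1.2
    have hsum' : ∑ j ∈ range s, p1 j + ∑ j ∈ range s, p2 j = k := hp.2
    refine ⟨?_, ?_, ?_, ?_⟩
    · intro i j j' hjj'
      fin_cases i
      · simp only [Matrix.cons_val_zero]
        exact h1'.1 _ _ hjj'
      · simp only [Matrix.cons_val_one, Matrix.head_cons]
        exact h2'.1 _ _ hjj'
    · intro j
      simp only [Matrix.cons_val_zero, Matrix.cons_val_one, Matrix.head_cons]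
      exact hdom' j
    · intro i j
      fin_cases i
      · simp only [Matrix.cons_val_zero]
        exact h1'.2.1 _
      · simp only [Matrix.cons_val_one, Matrix.head_cons]
        exact h2'.2.1 _
    · rw [Fin.sum_univ_two]
      simp only [Matrix.cons_val_zero, Matrix.cons_val_one, Matrix.head_cons]
      have e1 : ∑ j : Fin s, p1 (j : ℕ) = ∑ j ∈ range s, p1 j :=
        Fin.sum_univ_eq_sum_range (fun j => p1 j) s
      have e2 : ∑ j : Fin s, p2 (j : ℕ) = ∑ j ∈ range s, p2 j :=
        Fin.sum_univ_eq_sum_range (fun j => p2 j) s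
      rw [e1, e2]
      exact hsum'
  · -- left inverse
    rintro ⟨f, hf⟩
    apply Subtype.ext
    funext i j
    fin_cases i
    · simp only [Matrix.cons_val_zero]
      show (if h : (j:ℕ) < s then f 0 ⟨(j:ℕ), h⟩ else 0) = f 0 j
      rw [dif_pos j.isLt]
    · simp only [Matrix.cons_val_one, Matrix.head_cons]
      show (if h : (j:ℕ) < s then f 1 ⟨(j:ℕ), h⟩ else 0) = f 1 j
      rw [dif_pos j.isLt]
  · -- right inverse
    rintro ⟨⟨p1, p2⟩, hp⟩
    rw [Finset.mem_filter, ppF, Finset.mem_filter, Finset.mem_product,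
      mem_boxF, mem_boxF] at hp
    have h1' : IsBox s t p1 := hp.1.1.1
    have h2' : IsBox s t p2 := hp.1.1.2
    apply Subtype.ext
    refine Prod.ext ?_ ?_
    · show (fun j => if h : j < s then (![fun j => p1 (j : ℕ), fun j => p2 (j : ℕ)] :
          Fin 2 → Fin s → ℕ) 0 ⟨j, h⟩ else 0) = p1
      funext j
      by_cases hj : j < s
      · simp only [dif_pos hj, Matrix.cons_val_zero]
      · simp only [dif_neg hj]
        exact (h1'.2.2 j (by omega)).symm
    · show (fun j => if h : j < s then (![fun j => p1 (j : ℕ), fun j => p2 (j : ℕ)] :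
          Fin 2 → Fin s → ℕ) 1 ⟨j, h⟩ else 0) = p2
      funext j
      by_cases hj : j < s
      · simp only [dif_pos hj, Matrix.cons_val_one, Matrix.head_cons, Matrix.cons_val_zero]
      · simp only [dif_neg hj]
        exact (h2'.2.2 j (by omega)).symm

lemma F_eq (s t : ℕ) :
    (PowerSeries.mk fun k => (boxedPlanePartitionCount s t k : ℚ)) = PPser s t := by
  classical
  ext k
  rw [PowerSeries.coeff_mk, PPser, map_sum]
  have h1 : ∀ p ∈ ppF s t,
      (coeff k) ((X : ℚ⟦X⟧) ^ (∑ j ∈ range s, p.1 j + ∑ j ∈ range s, p.2 j))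
        = if (∑ j ∈ range s, p.1 j + ∑ j ∈ range s, p.2 j) = k then 1 else 0 := by
    intro p _
    rw [PowerSeries.coeff_X_pow]
    exact if_congr eq_comm rfl rfl
  rw [Finset.sum_congr rfl h1, Finset.sum_boole, count_eq]


lemma prod_shift' (s m : ℕ) :
    ∏ j ∈ Icc 1 (s+1), (1 - X ^ (m+j) : ℚ⟦X⟧)
      = (1 - X ^ (m+1)) * ∏ j ∈ Icc 1 s, (1 - X ^ (m+1+j)) := by
  rw [prod_shift s (fun j => 1 - X ^ (m+j))]
  congr 1
  exact Finset.prod_congr rfl fun j _ => by rw [show m+(j+1) = m+1+j by omega]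

lemma one_sub_X_pow_ne_zero (n : ℕ) (hn : 1 ≤ n) : (1 - X ^ n : ℚ⟦X⟧) ≠ 0 := by
  intro h
  have h2 := congrArg (constantCoeff : ℚ⟦X⟧ →+* ℚ) h
  rw [map_sub, map_one, map_pow, constantCoeff_X, zero_pow (by omega : n ≠ 0), map_zero] at h2
  norm_num at h2


lemma PPser_of_singleton {s t : ℕ} (h : boxF s t = {fun _ => 0}) : PPser s t = 1 := by
  classical
  rw [PPser, ppF, h, Finset.singleton_product_singleton, Finset.filter_singleton,
    if_pos (fun j => le_rfl)]
  simp

lemma PPser_triv_left (t : ℕ) : PPser 0 t = 1 := PPser_of_singleton (boxF_zero_left t)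

lemma PPser_triv_right (s : ℕ) : PPser s 0 = 1 := PPser_of_singleton (boxF_zero_right s)

/-- MacMahon's box formula for `r = 2`. -/
theorem macMahon_box_two_rows (s t : ℕ) :
    (PowerSeries.mk fun k => (boxedPlanePartitionCount s t k : ℚ)) *
        (∏ j ∈ Finset.Icc 1 s, ((1 - X ^ j) * (1 - X ^ (j + 1)))) =
      ∏ j ∈ Finset.Icc 1 s, ((1 - X ^ (j + t)) * (1 - X ^ (j + t + 1))) := by
  rw [F_eq]
  rcases s with _ | s
  · rw [show (Icc 1 0 : Finset ℕ) = ∅ by rfl]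
    simp [PPser_triv_left]
  rcases t with _ | t
  · rw [PPser_triv_right, one_mul]
    refine Finset.prod_congr rfl fun j _ => ?_
    rw [show j + 0 = j by omega]
  -- main case
  set D : ℚ⟦X⟧ := ∏ j ∈ Icc 1 (s+1), (1 - X ^ j) with hD
  set E : ℚ⟦X⟧ := ∏ j ∈ Icc 1 (s+1), (1 - X ^ (j+1)) with hE
  set D0 : ℚ⟦X⟧ := ∏ j ∈ Icc 1 s, (1 - X ^ j) with hD0
  set D2 : ℚ⟦X⟧ := ∏ j ∈ Icc 1 (s+2), (1 - X ^ j) with hD2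
  set N : ℚ⟦X⟧ := ∏ j ∈ Icc 1 (s+1), (1 - X ^ ((t+1)+j)) with hN
  set N4 : ℚ⟦X⟧ := ∏ j ∈ Icc 1 (s+1), (1 - X ^ ((t+2)+j)) with hN4
  set M2 : ℚ⟦X⟧ := ∏ j ∈ Icc 1 (s+2), (1 - X ^ (t+j)) with hM2
  set M3 : ℚ⟦X⟧ := ∏ j ∈ Icc 1 s, (1 - X ^ ((t+2)+j)) with hM3
  set M5 : ℚ⟦X⟧ := ∏ j ∈ Icc 1 (s+2), (1 - X ^ ((t+1)+j)) with hM5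
  have hP : (∏ j ∈ Icc 1 (s+1), ((1 - X ^ j) * (1 - X ^ (j + 1)) : ℚ⟦X⟧)) = D * E := by
    rw [Finset.prod_mul_distrib]
  have hR : (∏ j ∈ Icc 1 (s+1), ((1 - X ^ (j + (t+1))) * (1 - X ^ (j + (t+1) + 1)) : ℚ⟦X⟧))
      = N * N4 := by
    rw [Finset.prod_mul_distrib]
    congr 1
    · exact Finset.prod_congr rfl fun j _ => by rw [show j + (t+1) = (t+1)+j by omega]
    · exact Finset.prod_congr rfl fun j _ => by rw [show j + (t+1) + 1 = (t+2)+j by omega]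
  rw [hP, hR]
  have b1 : Bser (s+1) (t+1) * D = N := Bprod (s+1) (t+1)
  have b2 : Bser (s+2) t * D2 = M2 := Bprod (s+2) t
  have b3 : Bser s (t+2) * D0 = M3 := Bprod s (t+2)
  have d1 : D = D0 * (1 - X ^ (s+1)) := prod_top s (fun j => 1 - X ^ j)
  have d2 : D2 = D * (1 - X ^ (s+2)) := prod_top (s+1) (fun j => 1 - X ^ j)
  have e0 : (1 - X) * E = D2 := by
    rw [hE, hD2, prod_shift (s+1) (fun j => 1 - X ^ j), pow_one]
  have m2 : M2 = (1 - X ^ (t+1)) * N := prod_shift' (s+1) t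
  have m3 : (1 - X ^ (t+2)) * M3 = N := (prod_shift' s (t+1)).symm
  have m4 : (1 - X ^ (t+2)) * N4 = M5 := (prod_shift' (s+1) (t+1)).symm
  have m5 : M5 = N * (1 - X ^ ((t+1)+(s+2))) := prod_top (s+1) (fun j => 1 - X ^ ((t+1)+j))
  have hPP : PPser (s+1) (t+1)
      = Bser (s+1) (t+1) * Bser (s+1) (t+1) - X * (Bser (s+2) t * Bser s (t+2)) := by
    linear_combination - key_reflection s t
  have hx : ((1 - X ^ (s+2)) * (1 - X ^ (t+2)) - X * ((1 - X ^ (t+1)) * (1 - X ^ (s+1)))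
      : ℚ⟦X⟧) = (1 - X) * (1 - X ^ ((t+1)+(s+2))) := by
    have e1 : (X : ℚ⟦X⟧) ^ (s+2) = X * X ^ (s+1) := by rw [← pow_succ']
    have e2 : (X : ℚ⟦X⟧) ^ (t+2) = X * X ^ (t+1) := by rw [← pow_succ']
    have e3 : (X : ℚ⟦X⟧) ^ ((t+1)+(s+2)) = X * (X ^ (t+1) * X ^ (s+1)) := by
      rw [show t+1+(s+2) = t+1+(s+1)+1 by omega, ← pow_add, ← pow_succ']
    rw [e1, e2, e3]
    ring
  have hc : ((1 - X) * (1 - X ^ (t+2)) : ℚ⟦X⟧) ≠ 0 := by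
    refine mul_ne_zero ?_ (one_sub_X_pow_ne_zero (t+2) (by omega))
    have := one_sub_X_pow_ne_zero 1 le_rfl
    rwa [pow_one] at this
  apply mul_right_cancel₀ hc
  calc PPser (s+1) (t+1) * (D * E) * ((1 - X) * (1 - X ^ (t+2)))
      = PPser (s+1) (t+1) * D * ((1 - X) * E) * (1 - X ^ (t+2)) := by ring
    _ = PPser (s+1) (t+1) * D * D2 * (1 - X ^ (t+2)) := by rw [e0]
    _ = (Bser (s+1) (t+1) * Bser (s+1) (t+1)
          - X * (Bser (s+2) t * Bser s (t+2))) * D * D2 * (1 - X ^ (t+2)) := by rw [hPP]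
    _ = (N * (N * (1 - X ^ (s+2))) - X * (M2 * (M3 * (1 - X ^ (s+1))))) * (1 - X ^ (t+2)) := by
        have hA : Bser (s+1) (t+1) * Bser (s+1) (t+1) * (D * D2)
            = N * (N * (1 - X ^ (s+2))) := by
          linear_combination (Bser (s+1) (t+1) * D * (1 - X ^ (s+2))
            + N * (1 - X ^ (s+2))) * b1
            + Bser (s+1) (t+1) * Bser (s+1) (t+1) * D * d2
        have hB : X * (Bser (s+2) t * Bser s (t+2)) * (D * D2)
            = X * (M2 * (M3 * (1 - X ^ (s+1)))) := by
          linear_combination X * (Bser (s+2) t * Bser s (t+2) * D2) * d1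
            + X * ((1 - X ^ (s+1)) * (Bser s (t+2) * D0)) * b2
            + X * ((1 - X ^ (s+1)) * M2) * b3
        linear_combination (1 - X ^ (t+2)) * hA - (1 - X ^ (t+2)) * hB
    _ = N * N * ((1 - X ^ (s+2)) * (1 - X ^ (t+2))
          - X * ((1 - X ^ (t+1)) * (1 - X ^ (s+1))))
          + (- X * (1 - X ^ (t+1)) * N * (1 - X ^ (s+1)))
            * ((1 - X ^ (t+2)) * M3 - N) := by rw [m2]; ring
    _ = N * N * ((1 - X) * (1 - X ^ ((t+1)+(s+2)))) := by rw [m3, hx]; ring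
    _ = N * ((1 - X ^ (t+2)) * N4) * (1 - X) := by rw [m4, m5]; ring
    _ = N * N4 * ((1 - X) * (1 - X ^ (t+2))) := by ring

end
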